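/- Let M be an n×n random symmetric 0/1 matrix with zero diagonal whose above-diagonal entries are independent, with Pr[M(i,j) = 1] = p_{ij} ≤ α/n for all i < j, where α ≥ 1. Let S ⊆ [n] be the (random) set of rows with more than 20α ones. Then the expected total number of ones in rows indexed by S is at most exp(−2α)·n·α. -/

import Mathlib

open MeasureTheory

/-- Entry `(i,j)` of the symmetric 0/1 matrix with zero diagonal encoded by the
above-diagonal indicator `ω`. -/
def symEntry {n : ℕ} (ω : {p : Fin n × Fin n // p.1 < p.2} → Bool) (i j : Fin n) : ℝ :=
  if h : i < j then (if ω ⟨(i, j), h⟩ then 1 else 0)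
  else if h' : j < i then (if ω ⟨(j, i), h'⟩ then 1 else 0) else 0

namespace HeavyRowsAux

abbrev Idx (n : ℕ) := {q : Fin n × Fin n // q.1 < q.2}

/-- weight of a boolean outcome at coordinate `q` -/
noncomputable def wt {n : ℕ} (p : Idx n → ℝ) (q : Idx n) (b : Bool) : ℝ :=
  if b then p q else 1 - p q

lemma wt_nonneg {n : ℕ} (p : Idx n → ℝ) (hp0 : ∀ q, 0 ≤ p q) (hp1 : ∀ q, p q ≤ 1)
    (q : Idx n) (b : Bool) : 0 ≤ wt p q b := by
  cases b <;> simp [wt] <;> [linarith [hp1 q]; exact hp0 q]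

/-- contribution of coordinate `q` to row `i` -/
def cc {n : ℕ} (i : Fin n) (q : Idx n) (b : Bool) : ℝ :=
  if q.val.1 = i ∨ q.val.2 = i then (if b then 1 else 0) else 0

lemma pi_singleton {n : ℕ} (p : Idx n → ℝ) (hp0 : ∀ q, 0 ≤ p q)
    (h : ∀ q, Real.toNNReal (p q) ≤ 1) (ω : Idx n → Bool) :
    ((Measure.pi (fun q => (PMF.bernoulli (Real.toNNReal (p q)) (h q)).toMeasure)) {ω}).toReal
      = ∏ q, wt p q (ω q) := by
  rw [← Set.univ_pi_singleton ω, Measure.pi_pi, ENNReal.toReal_prod]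
  refine Finset.prod_congr rfl fun q _ => ?_
  rw [PMF.toMeasure_apply_singleton _ _ (measurableSet_singleton _), PMF.bernoulli_apply]
  cases hb : ω q
  · simp [wt, ENNReal.toReal_sub_of_le (ENNReal.coe_le_one_iff.mpr (h q)) (by simp), Real.coe_toNNReal _ (hp0 q)]
  · simp [wt, Real.coe_toNNReal _ (hp0 q)]

lemma row_eq {n : ℕ} (ω : Idx n → Bool) (i : Fin n) :
    ∑ j, symEntry ω i j = ∑ q : Idx n, cc i q (ω q) := by
  have h0 : symEntry ω i i = 0 := by simp [symEntry]
  rw [← Finset.sum_erase Finset.univ h0]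
  classical
  rw [show (∑ q : Idx n, cc i q (ω q))
      = ∑ q ∈ Finset.univ.filter (fun q : Idx n => q.val.1 = i ∨ q.val.2 = i),
          (if ω q then (1:ℝ) else 0) from by
    rw [Finset.sum_filter]; exact Finset.sum_congr rfl fun q _ => by simp [cc]]
  refine Finset.sum_bij' (fun j hj => ?_) (fun q hq => if q.val.1 = i then q.val.2 else q.val.1)
      ?_ ?_ ?_ ?_ ?_
  · exact if h : i < j then ⟨(i, j), h⟩ else ⟨(j, i), by
      rcases lt_or_gt_of_ne (Finset.ne_of_mem_erase hj) with h' | h'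
      · exact h'
      · exact absurd h' h⟩
  · intro j hj
    by_cases h : i < j <;> simp [h]
  · intro q hq
    simp only [Finset.mem_filter] at hq
    beta_reduce
    rcases hq.2 with h | h
    · rw [if_pos h]
      refine Finset.mem_erase.mpr ⟨fun hc => ?_, Finset.mem_univ _⟩
      have := q.2; rw [h, hc] at this; exact lt_irrefl _ this
    · have hne : q.val.1 ≠ i := by
        intro hc; have := q.2; rw [hc, h] at this; exact lt_irrefl _ this
      rw [if_neg hne]
      refine Finset.mem_erase.mpr ⟨fun hc => ?_, Finset.mem_univ _⟩
      have := q.2; rw [hc, h] at this; exact lt_irrefl _ this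
  · intro j hj
    by_cases h : i < j
    · simp [h, (ne_of_lt h).symm]
    · have h' : j < i := by
        rcases lt_or_gt_of_ne (Finset.ne_of_mem_erase hj) with h'' | h''
        · exact h''
        · exact absurd h'' h
      simp [h, ne_of_lt h']
  · intro q hq
    simp only [Finset.mem_filter] at hq
    beta_reduce
    by_cases h : q.val.1 = i
    · simp only [if_pos h]
      have hi : i < q.val.2 := h ▸ q.2
      rw [dif_pos hi]
      exact Subtype.ext (Prod.ext h.symm rfl)
    · have h2 : q.val.2 = i := hq.2.resolve_left h
      simp only [if_neg h]
      have hlt : q.val.1 < i := h2 ▸ q.2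
      have hni : ¬ i < q.val.1 := not_lt_of_gt hlt
      rw [dif_neg hni]
      exact Subtype.ext (Prod.ext rfl h2.symm)
  · intro j hj
    by_cases h : i < j <;> simp [symEntry, h]
    have h' : j < i := by
      rcases lt_or_gt_of_ne (Finset.ne_of_mem_erase hj) with h'' | h''
      · exact h''
      · exact absurd h'' h
    simp [h']

/-- pointwise bound: `x·1{x>t} ≤ (2/e)·e^{-t/2}·e^x` -/
lemma point (t x : ℝ) :
    (if t < x then x else 0) ≤ 2 / Real.exp 1 * Real.exp (-t / 2) * Real.exp x := by
  split_ifs with h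
  · have h1 : x / 2 ≤ Real.exp (x / 2 - 1) := by
      have := Real.add_one_le_exp (x / 2 - 1); linarith
    have h2 : Real.exp (x / 2 - 1) ≤ Real.exp (x - t / 2 - 1) :=
      Real.exp_le_exp.mpr (by linarith)
    calc x ≤ 2 * Real.exp (x - t / 2 - 1) := by linarith
      _ = 2 / Real.exp 1 * Real.exp (-t / 2) * Real.exp x := by
          rw [show x - t / 2 - 1 = -t / 2 + x - 1 by ring, Real.exp_sub, Real.exp_add]
          ring
  · positivity

lemma coord_bound {n : ℕ} (p : Idx n → ℝ) (hp0 : ∀ q, 0 ≤ p q) (i : Fin n) (q : Idx n) :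
    ∑ b, wt p q b * Real.exp (cc i q b)
      ≤ Real.exp ((if q.val.1 = i ∨ q.val.2 = i then p q else 0) * (Real.exp 1 - 1)) := by
  classical
  rw [Fintype.sum_bool]
  by_cases h : q.val.1 = i ∨ q.val.2 = i
  · simp only [wt, cc, if_pos h, Bool.false_eq_true, if_true, if_false, Real.exp_zero]
    have := Real.add_one_le_exp (p q * (Real.exp 1 - 1))
    nlinarith [Real.exp_pos 1]
  · simp [wt, cc, h]

lemma card_filter_le {n : ℕ} (i : Fin n) :
    (Finset.univ.filter (fun q : Idx n => q.val.1 = i ∨ q.val.2 = i)).card ≤ n := by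
  classical
  have hmap : ∀ q ∈ (Finset.univ.filter (fun q : Idx n => q.val.1 = i ∨ q.val.2 = i)),
      (if q.val.1 = i then q.val.2 else q.val.1) ∈ (Finset.univ : Finset (Fin n)) :=
    fun q _ => Finset.mem_univ _
  have hinj : Set.InjOn (fun q : Idx n => if q.val.1 = i then q.val.2 else q.val.1)
      (Finset.univ.filter (fun q : Idx n => q.val.1 = i ∨ q.val.2 = i)) := by
    intro q hq q' hq' hqq'
    simp only [Finset.coe_filter, Set.mem_setOf_eq] at hq hq'
    simp only at hqq'
    by_cases h : q.val.1 = i <;> by_cases h' : q'.val.1 = i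
    · rw [if_pos h, if_pos h'] at hqq'
      exact Subtype.ext (Prod.ext (h.trans h'.symm) hqq')
    · have h2 : q'.val.2 = i := hq'.2.resolve_left h'
      rw [if_pos h, if_neg h'] at hqq'
      have hq2 : i < q.val.2 := h ▸ q.2
      have hq'1 : q'.val.1 < i := h2 ▸ q'.2
      rw [← hqq'] at hq'1
      exact absurd (hq2.trans hq'1) (lt_irrefl _)
    · have h2 : q.val.2 = i := hq.2.resolve_left h
      rw [if_neg h, if_pos h'] at hqq'
      have hq1 : q.val.1 < i := h2 ▸ q.2
      have hq'2 : i < q'.val.2 := h' ▸ q'.2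
      rw [hqq'] at hq1
      exact absurd (hq'2.trans hq1) (lt_irrefl _)
    · have h2 : q.val.2 = i := hq.2.resolve_left h
      have h2' : q'.val.2 = i := hq'.2.resolve_left h'
      rw [if_neg h, if_neg h'] at hqq'
      exact Subtype.ext (Prod.ext hqq' (h2.trans h2'.symm))
  have := Finset.card_le_card_of_injOn _ hmap hinj
  simpa using this

lemma dd_sum_le {n : ℕ} (hn : 0 < n) (α : ℝ) (hα0 : 0 ≤ α) (p : Idx n → ℝ)
    (hpα : ∀ q, p q ≤ α / n) (i : Fin n) :
    ∑ q : Idx n, (if q.val.1 = i ∨ q.val.2 = i then p q else 0) ≤ α := by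
  classical
  rw [← Finset.sum_filter]
  have hn' : (0:ℝ) < n := by exact_mod_cast hn
  calc ∑ q ∈ Finset.univ.filter (fun q : Idx n => q.val.1 = i ∨ q.val.2 = i), p q
      ≤ ∑ q ∈ Finset.univ.filter (fun q : Idx n => q.val.1 = i ∨ q.val.2 = i), α / n :=
        Finset.sum_le_sum fun q _ => hpα q
    _ = ((Finset.univ.filter (fun q : Idx n => q.val.1 = i ∨ q.val.2 = i)).card : ℝ) * (α / n) := by
        rw [Finset.sum_const, nsmul_eq_mul]
    _ ≤ (n : ℝ) * (α / n) := by
        apply mul_le_mul_of_nonneg_right _ (by positivity)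
        exact_mod_cast card_filter_le i
    _ = α := by field_simp

end HeavyRowsAux

open HeavyRowsAux

theorem heavy_rows_expected_ones (n : ℕ) (hn : 0 < n) (α : ℝ) (hα : 1 ≤ α)
    (p : {q : Fin n × Fin n // q.1 < q.2} → ℝ)
    (hp0 : ∀ q, 0 ≤ p q) (hp1 : ∀ q, p q ≤ 1) (hpα : ∀ q, p q ≤ α / n) :
    (∫ ω, (∑ i, if 20 * α < ∑ j, symEntry ω i j then ∑ j, symEntry ω i j else 0)
        ∂ Measure.pi (fun q => (PMF.bernoulli (Real.toNNReal (p q))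
            (Real.toNNReal_le_one.mpr (hp1 q))).toMeasure))
      ≤ Real.exp (-2 * α) * n * α := by
  classical
  have hα0 : (0:ℝ) ≤ α := le_trans zero_le_one hα
  set C : ℝ := 2 / Real.exp 1 * Real.exp (-(20 * α) / 2) with hC
  have hC0 : 0 ≤ C := by positivity
  have hW0 : ∀ ω : Idx n → Bool, 0 ≤ ∏ q, wt p q (ω q) :=
    fun ω => Finset.prod_nonneg fun q _ => wt_nonneg p hp0 hp1 q (ω q)
  -- Step 1: integral as finite sum
  rw [integral_fintype (Integrable.of_finite)]
  have hsing := pi_singleton p hp0 (fun q => Real.toNNReal_le_one.mpr (hp1 q))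
  calc ∑ ω : Idx n → Bool,
        ((Measure.pi (fun q => (PMF.bernoulli (Real.toNNReal (p q))
            (Real.toNNReal_le_one.mpr (hp1 q))).toMeasure)) {ω}).toReal
          • (∑ i, if 20 * α < ∑ j, symEntry ω i j then ∑ j, symEntry ω i j else 0)
      = ∑ ω : Idx n → Bool, (∏ q, wt p q (ω q))
          * (∑ i, if 20 * α < ∑ j, symEntry ω i j then ∑ j, symEntry ω i j else 0) := by
        refine Finset.sum_congr rfl fun ω _ => ?_
        rw [hsing ω, smul_eq_mul]
    _ ≤ ∑ ω : Idx n → Bool, (∏ q, wt p q (ω q))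
          * (C * ∑ i, Real.exp (∑ q, cc i q (ω q))) := by
        refine Finset.sum_le_sum fun ω _ => mul_le_mul_of_nonneg_left ?_ (hW0 ω)
        rw [Finset.mul_sum]
        refine Finset.sum_le_sum fun i _ => ?_
        rw [row_eq ω i, hC]
        exact point (20 * α) _
    _ = C * ∑ i : Fin n, ∑ ω : Idx n → Bool,
          ∏ q, (wt p q (ω q) * Real.exp (cc i q (ω q))) := by
        have hpt : ∀ (ω : Idx n → Bool) (i : Fin n),
            (∏ q, wt p q (ω q)) * Real.exp (∑ q, cc i q (ω q))
              = ∏ q, (wt p q (ω q) * Real.exp (cc i q (ω q))) := fun ω i => by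
          rw [Real.exp_sum, Finset.prod_mul_distrib]
        simp only [Finset.mul_sum, ← hpt]
        rw [Finset.sum_comm]
        refine Finset.sum_congr rfl fun i _ => Finset.sum_congr rfl fun ω _ => by ring
    _ = C * ∑ i : Fin n, ∏ q : Idx n, ∑ b, wt p q b * Real.exp (cc i q b) := by
        congr 1
        refine Finset.sum_congr rfl fun i _ => ?_
        rw [Finset.prod_univ_sum, Fintype.piFinset_univ]
    _ ≤ C * ∑ i : Fin n, Real.exp ((Real.exp 1 - 1) * α) := by
        refine mul_le_mul_of_nonneg_left (Finset.sum_le_sum fun i _ => ?_) hC0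
        calc ∏ q : Idx n, ∑ b, wt p q b * Real.exp (cc i q b)
            ≤ ∏ q : Idx n, Real.exp ((if q.val.1 = i ∨ q.val.2 = i then p q else 0)
                * (Real.exp 1 - 1)) := by
              refine Finset.prod_le_prod (fun q _ => Finset.sum_nonneg fun b _ => ?_)
                (fun q _ => coord_bound p hp0 i q)
              exact mul_nonneg (wt_nonneg p hp0 hp1 q b) (Real.exp_pos _).le
          _ = Real.exp (∑ q : Idx n,
                (if q.val.1 = i ∨ q.val.2 = i then p q else 0) * (Real.exp 1 - 1)) := by
              rw [Real.exp_sum]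
          _ ≤ Real.exp ((Real.exp 1 - 1) * α) := by
              apply Real.exp_le_exp.mpr
              rw [← Finset.sum_mul]
              have h9 : (0:ℝ) ≤ Real.exp 1 - 1 := by
                have := Real.add_one_le_exp (1:ℝ); linarith
              calc (∑ q : Idx n, if q.val.1 = i ∨ q.val.2 = i then p q else 0)
                    * (Real.exp 1 - 1)
                  ≤ α * (Real.exp 1 - 1) :=
                    mul_le_mul_of_nonneg_right (dd_sum_le hn α hα0 p hpα i) h9
                _ = (Real.exp 1 - 1) * α := by ring
    _ ≤ Real.exp (-2 * α) * n * α := by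
        rw [Finset.sum_const, Finset.card_univ, Fintype.card_fin, nsmul_eq_mul]
        -- key numeric inequality
        have key : 2 * Real.exp ((Real.exp 1 - 9) * α - 1) ≤ α := by
          have he : Real.exp 1 ≤ 3 := by
            have := Real.exp_one_lt_d9; linarith
          have h1 : (Real.exp 1 - 9) * α - 1 ≤ -7 := by nlinarith
          have h2 : Real.exp ((Real.exp 1 - 9) * α - 1) ≤ Real.exp (-7) :=
            Real.exp_le_exp.mpr h1
          have h3 : Real.exp (-7) ≤ 1 / 8 := by
            rw [Real.exp_neg]
            have h8 : (8:ℝ) ≤ Real.exp 7 := by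
              have := Real.add_one_le_exp (7:ℝ); linarith
            rw [inv_le_comm₀ (Real.exp_pos 7) (by norm_num)] at *
            · linarith
          linarith
        have main : C * Real.exp ((Real.exp 1 - 1) * α) ≤ Real.exp (-2 * α) * α := by
          have h2 : Real.exp (-(20 * α) / 2) * Real.exp ((Real.exp 1 - 1) * α)
              = Real.exp (-2 * α) * (Real.exp 1 * Real.exp ((Real.exp 1 - 9) * α - 1)) := by
            rw [← Real.exp_add, ← Real.exp_add, ← Real.exp_add]
            congr 1
            ring
          calc C * Real.exp ((Real.exp 1 - 1) * α)
              = 2 / Real.exp 1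
                  * (Real.exp (-(20 * α) / 2) * Real.exp ((Real.exp 1 - 1) * α)) := by
                rw [hC]; ring
            _ = Real.exp (-2 * α) * (2 * Real.exp ((Real.exp 1 - 9) * α - 1)) := by
                rw [h2]
                have hE : Real.exp 1 ≠ 0 := (Real.exp_pos 1).ne'
                field_simp
            _ ≤ Real.exp (-2 * α) * α :=
                mul_le_mul_of_nonneg_left key (Real.exp_pos _).le
        calc C * ((n : ℝ) * Real.exp ((Real.exp 1 - 1) * α))
            = (n : ℝ) * (C * Real.exp ((Real.exp 1 - 1) * α)) := by ring
          _ ≤ (n : ℝ) * (Real.exp (-2 * α) * α) :=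
              mul_le_mul_of_nonneg_left main (Nat.cast_nonneg n)
          _ = Real.exp (-2 * α) * n * α := by ring
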